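/- (Fundamental Theorem of Language Change.) Let a₁, a₂ > 0 and let f : [0,1] → [0,1] be the two-grammar Variational Learning map f(p) = a₁p / (a₁p + a₂(1−p)). If a₁ > a₂, then for every initial state p₀ with 0 < p₀ ≤ 1 the iterates fⁿ(p₀) converge to 1 as n → ∞ (grammar G₁ wins in diachrony). If a₁ < a₂, then for every initial state p₀ with 0 ≤ p₀ < 1 the iterates fⁿ(p₀) converge to 0 as n → ∞ (grammar G₂ wins in diachrony). -/

import Mathlib

open Filter Topology

private lemma denom_pos (a₁ a₂ : ℝ) (ha₁ : 0 < a₁) (ha₂ : 0 < a₂)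
    (p : ℝ) (hp : 0 ≤ p) (hp1 : p ≤ 1) (n : ℕ) :
    0 < a₁ ^ n * p + a₂ ^ n * (1 - p) := by
  rcases eq_or_lt_of_le hp with h | h
  · simp [← h]
    positivity
  · have : 0 ≤ a₂ ^ n * (1 - p) := by
      apply mul_nonneg (le_of_lt (pow_pos ha₂ n)); linarith
    nlinarith [pow_pos ha₁ n]

private lemma iter_form (a₁ a₂ : ℝ) (ha₁ : 0 < a₁) (ha₂ : 0 < a₂)
    (f : ℝ → ℝ) (hf : ∀ p, f p = a₁ * p / (a₁ * p + a₂ * (1 - p)))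
    (p : ℝ) (hp : 0 ≤ p) (hp1 : p ≤ 1) (n : ℕ) :
    f^[n] p = a₁ ^ n * p / (a₁ ^ n * p + a₂ ^ n * (1 - p)) := by
  induction n with
  | zero => simp
  | succ n ih =>
    have hd := denom_pos a₁ a₂ ha₁ ha₂ p hp hp1 n
    have hd' := denom_pos a₁ a₂ ha₁ ha₂ p hp hp1 (n + 1)
    rw [Function.iterate_succ_apply', ih, hf]
    have key : a₁ * (a₁ ^ n * p / (a₁ ^ n * p + a₂ ^ n * (1 - p)))
        + a₂ * (1 - a₁ ^ n * p / (a₁ ^ n * p + a₂ ^ n * (1 - p)))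
        = (a₁ ^ (n + 1) * p + a₂ ^ (n + 1) * (1 - p))
          / (a₁ ^ n * p + a₂ ^ n * (1 - p)) := by
      field_simp
      ring
    rw [key]
    rw [div_eq_div_iff (by positivity) (ne_of_gt hd')]
    field_simp
    ring

theorem stmt_2 (a₁ a₂ : ℝ) (ha₁ : 0 < a₁) (ha₂ : 0 < a₂)
    (f : ℝ → ℝ) (hf : ∀ p, f p = a₁ * p / (a₁ * p + a₂ * (1 - p))) :
    (a₂ < a₁ → ∀ p₀ : ℝ, 0 < p₀ → p₀ ≤ 1 →
      Tendsto (fun n => f^[n] p₀) atTop (𝓝 1)) ∧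
    (a₁ < a₂ → ∀ p₀ : ℝ, 0 ≤ p₀ → p₀ < 1 →
      Tendsto (fun n => f^[n] p₀) atTop (𝓝 0)) := by
  constructor
  · intro hlt p₀ hp0 hp1
    have heq : (fun n => f^[n] p₀)
        = fun n => p₀ / (p₀ + (a₂ / a₁) ^ n * (1 - p₀)) := by
      funext n
      rw [iter_form a₁ a₂ ha₁ ha₂ f hf p₀ hp0.le hp1 n, div_pow]
      have h1 : (0:ℝ) < a₁ ^ n := pow_pos ha₁ n
      rw [div_eq_div_iff (ne_of_gt (denom_pos a₁ a₂ ha₁ ha₂ p₀ hp0.le hp1 n))]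
      · field_simp
      · have h2 : (0:ℝ) ≤ a₂ ^ n / a₁ ^ n * (1 - p₀) := by
          apply mul_nonneg (by positivity); linarith
        nlinarith
    rw [heq]
    have hr : |a₂ / a₁| < 1 := by
      rw [abs_of_pos (by positivity)]
      rw [div_lt_one ha₁]; exact hlt
    have hpow : Tendsto (fun n : ℕ => (a₂ / a₁) ^ n) atTop (𝓝 0) :=
      tendsto_pow_atTop_nhds_zero_of_abs_lt_one hr
    have hden : Tendsto (fun n : ℕ => p₀ + (a₂ / a₁) ^ n * (1 - p₀)) atTop (𝓝 p₀) := by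
      have := (hpow.mul_const (1 - p₀)).const_add p₀
      simpa using this
    have := Tendsto.div (tendsto_const_nhds (x := p₀)) hden (ne_of_gt hp0)
    simpa [div_self (ne_of_gt hp0), Pi.div_def] using this
  · intro hlt p₀ hp0 hp1
    have heq : (fun n => f^[n] p₀)
        = fun n => (a₁ / a₂) ^ n * p₀ / ((a₁ / a₂) ^ n * p₀ + (1 - p₀)) := by
      funext n
      rw [iter_form a₁ a₂ ha₁ ha₂ f hf p₀ hp0 hp1.le n, div_pow]
      have h1 : (0:ℝ) < a₂ ^ n := pow_pos ha₂ n
      rw [div_eq_div_iff (ne_of_gt (denom_pos a₁ a₂ ha₁ ha₂ p₀ hp0 hp1.le n))]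
      · field_simp
        try ring
        try tauto
      · have h2 : (0:ℝ) ≤ a₁ ^ n / a₂ ^ n * p₀ := by
          apply mul_nonneg (by positivity) hp0
        nlinarith
    rw [heq]
    have hr : |a₁ / a₂| < 1 := by
      rw [abs_of_pos (by positivity)]
      rw [div_lt_one ha₂]; exact hlt
    have hpow : Tendsto (fun n : ℕ => (a₁ / a₂) ^ n) atTop (𝓝 0) :=
      tendsto_pow_atTop_nhds_zero_of_abs_lt_one hr
    have hnum : Tendsto (fun n : ℕ => (a₁ / a₂) ^ n * p₀) atTop (𝓝 0) := by
      simpa using hpow.mul_const p₀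
    have hden : Tendsto (fun n : ℕ => (a₁ / a₂) ^ n * p₀ + (1 - p₀)) atTop (𝓝 (1 - p₀)) := by
      simpa using hnum.add_const (1 - p₀)
    have := Tendsto.div hnum hden (by linarith : (1:ℝ) - p₀ ≠ 0)
    simpa [Pi.div_def] using this
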